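/- Let (s_n, t_n) solve the linear system s_n = α + t_{n-1}/α^p, t_n = α + s_{n-1}/α^q for n ≥ 4, with s_i = x_i, t_i = y_i for i = 1, 2, 3, where (x_n, y_n) is a positive solution of the nonlinear system with α > 1 and 0 < p, q ≤ 1. Then x_n < s_n and y_n < t_n for all n ≥ 4. -/

import Mathlib

theorem comparison_system (α p q : ℝ) (hα : 1 < α) (hp : 0 < p) (hp1 : p ≤ 1)
    (hq : 0 < q) (hq1 : q ≤ 1)
    (x y s t : ℤ → ℝ)
    (hx0 : ∀ n : ℤ, -2 ≤ n → 0 < x n) (hy0 : ∀ n : ℤ, -2 ≤ n → 0 < y n)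
    (hx : ∀ n : ℤ, 0 ≤ n → x (n + 1) = α + y n ^ p / y (n - 2) ^ p)
    (hy : ∀ n : ℤ, 0 ≤ n → y (n + 1) = α + x n ^ q / x (n - 2) ^ q)
    (hs : ∀ n : ℤ, 4 ≤ n → s n = α + t (n - 1) / α ^ p)
    (ht : ∀ n : ℤ, 4 ≤ n → t n = α + s (n - 1) / α ^ q)
    (hinit : ∀ i : ℤ, i = 1 ∨ i = 2 ∨ i = 3 → s i = x i ∧ t i = y i) :
    ∀ n : ℤ, 4 ≤ n → x n < s n ∧ y n < t n := by
  have hα0 : (0:ℝ) < α := lt_trans one_pos hα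
  have hαp : 0 < α ^ p := Real.rpow_pos_of_pos hα0 p
  have hαq : 0 < α ^ q := Real.rpow_pos_of_pos hα0 q
  have hxα : ∀ n : ℤ, 1 ≤ n → α < x n := by
    intro n hn
    have h := hx (n - 1) (by linarith)
    have e : n - 1 + 1 = n := by ring
    rw [e] at h
    have h1 : 0 < y (n - 1) := hy0 _ (by linarith)
    have h2 : 0 < y (n - 1 - 2) := hy0 _ (by linarith)
    have := div_pos (Real.rpow_pos_of_pos h1 p) (Real.rpow_pos_of_pos h2 p)
    rw [h]; linarith
  have hyα : ∀ n : ℤ, 1 ≤ n → α < y n := by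
    intro n hn
    have h := hy (n - 1) (by linarith)
    have e : n - 1 + 1 = n := by ring
    rw [e] at h
    have h1 : 0 < x (n - 1) := hx0 _ (by linarith)
    have h2 : 0 < x (n - 1 - 2) := hx0 _ (by linarith)
    have := div_pos (Real.rpow_pos_of_pos h1 q) (Real.rpow_pos_of_pos h2 q)
    rw [h]; linarith
  have keyx : ∀ n : ℤ, 4 ≤ n → x n < α + y (n - 1) / α ^ p := by
    intro n hn
    have h := hx (n - 1) (by linarith)
    have e : n - 1 + 1 = n := by ring
    rw [e] at h
    have hden : α ^ p < y (n - 1 - 2) ^ p :=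
      Real.rpow_lt_rpow (le_of_lt hα0) (hyα _ (by linarith)) hp
    have hyn1 : 1 ≤ y (n - 1) := le_of_lt (lt_trans hα (hyα _ (by linarith)))
    have hpos : 0 < y (n - 1) ^ p := Real.rpow_pos_of_pos (by linarith) p
    have h1 : y (n - 1) ^ p / y (n - 1 - 2) ^ p < y (n - 1) ^ p / α ^ p :=
      div_lt_div_of_pos_left hpos hαp hden
    have h2 : y (n - 1) ^ p ≤ y (n - 1) := by
      have := Real.rpow_le_rpow_of_exponent_le hyn1 hp1
      simpa [Real.rpow_one] using this
    have h3 : y (n - 1) ^ p / α ^ p ≤ y (n - 1) / α ^ p := by gcongr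
    rw [h]; linarith
  have keyy : ∀ n : ℤ, 4 ≤ n → y n < α + x (n - 1) / α ^ q := by
    intro n hn
    have h := hy (n - 1) (by linarith)
    have e : n - 1 + 1 = n := by ring
    rw [e] at h
    have hden : α ^ q < x (n - 1 - 2) ^ q :=
      Real.rpow_lt_rpow (le_of_lt hα0) (hxα _ (by linarith)) hq
    have hxn1 : 1 ≤ x (n - 1) := le_of_lt (lt_trans hα (hxα _ (by linarith)))
    have hpos : 0 < x (n - 1) ^ q := Real.rpow_pos_of_pos (by linarith) q
    have h1 : x (n - 1) ^ q / x (n - 1 - 2) ^ q < x (n - 1) ^ q / α ^ q :=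
      div_lt_div_of_pos_left hpos hαq hden
    have h2 : x (n - 1) ^ q ≤ x (n - 1) := by
      have := Real.rpow_le_rpow_of_exponent_le hxn1 hq1
      simpa [Real.rpow_one] using this
    have h3 : x (n - 1) ^ q / α ^ q ≤ x (n - 1) / α ^ q := by gcongr
    rw [h]; linarith
  intro n
  refine Int.le_induction (motive := fun k _ => x k < s k ∧ y k < t k) (m := 4) ?_ ?_ n
  ·
      have ex := keyx 4 (by norm_num)
      have ey := keyy 4 (by norm_num)
      have hs4 := hs 4 (by norm_num)
      have ht4 := ht 4 (by norm_num)
      have h3 := hinit 3 (by norm_num)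
      norm_num at ex ey hs4 ht4
      exact ⟨by rw [hs4, h3.2]; linarith, by rw [ht4, h3.1]; linarith⟩
  · intro n hn ih
    have dummy := 0
    have ex := keyx (n + 1) (by linarith)
    have ey := keyy (n + 1) (by linarith)
    have hsn := hs (n + 1) (by linarith)
    have htn := ht (n + 1) (by linarith)
    have e : n + 1 - 1 = n := by ring
    rw [e] at ex ey hsn htn
    constructor
    · have : y n / α ^ p < t n / α ^ p := by gcongr; exact ih.2
      linarith
    · have : x n / α ^ q < s n / α ^ q := by gcongr; exact ih.1
      linarith
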